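/- Let d ≥ 0 and k ≥ 2 be integers. For the full binary cube A = {0,1}^d ⊆ ℤ^d one has P_k(A) = (2k+2)^d; in particular P_k(A) = |A|^{log₂(2k+2)}, so the exponent log₂(2k+2) in the bound P_k(A) ≤ |A|^{log₂(2k+2)} cannot be decreased. -/
import Mathlib


open scoped BigOperators

/-- The discrete cube `{0,1,…,n-1}^d` inside `ℤ^d`. -/
def cube (n d : ℕ) : Set (Fin d → ℤ) := {x | ∀ i, 0 ≤ x i ∧ x i < n}

/-- The generalized additive energy
`P_k(A) = |{(a,h₁,…,h_k) : a+ε₁h₁+⋯+ε_kh_k ∈ A for all ε ∈ {0,1}^k}|`. -/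
noncomputable def Pk (k : ℕ) {d : ℕ} (A : Set (Fin d → ℤ)) : ℕ :=
  Set.ncard {p : (Fin d → ℤ) × (Fin k → Fin d → ℤ) |
    ∀ ε : Fin k → Bool,
      p.1 + ∑ i ∈ Finset.univ.filter (fun i => ε i = true), p.2 i ∈ A}

/-- The one-dimensional version of the energy set. -/
def Tset (k : ℕ) : Set (ℤ × (Fin k → ℤ)) :=
  {q | ∀ ε : Fin k → Bool,
      0 ≤ q.1 + ∑ i ∈ Finset.univ.filter (fun i => ε i = true), q.2 i ∧
      q.1 + ∑ i ∈ Finset.univ.filter (fun i => ε i = true), q.2 i < ((2 : ℕ) : ℤ)}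

/-- Enumeration of `Tset k`. -/
def tfun (k : ℕ) : Bool ⊕ (Fin k × Bool) → ℤ × (Fin k → ℤ)
  | Sum.inl b => ((if b then 1 else 0), 0)
  | Sum.inr (i, b) => ((if b then 0 else 1), fun j => if j = i then (if b then 1 else -1) else 0)

lemma tfun_injective (k : ℕ) : Function.Injective (tfun k) := by
  intro x y hxy
  match x, y with
  | Sum.inl b, Sum.inl b' =>
    have h1 := congrArg Prod.fst hxy
    simp only [tfun] at h1
    cases b <;> cases b' <;> simp_all <;> omega
  | Sum.inl b, Sum.inr (i, b') =>
    have h2 := congrArg (fun q => q.2 i) hxy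
    simp only [tfun] at h2
    cases b' <;> simp_all
  | Sum.inr (i, b), Sum.inl b' =>
    have h2 := congrArg (fun q => q.2 i) hxy
    simp only [tfun] at h2
    cases b <;> simp_all
  | Sum.inr (i, b), Sum.inr (i', b') =>
    have h2 := congrArg (fun q => q.2 i) hxy
    have h2' := congrArg (fun q => q.2 i') hxy
    simp only [tfun] at h2 h2'
    by_cases hii : i = i'
    · subst hii
      simp only [if_pos rfl] at h2
      cases b <;> cases b' <;> simp_all <;> omega
    · simp only [hii, if_true, if_false, if_neg hii] at h2
      cases b <;> simp_all
  
lemma filter_const_false (k : ℕ) :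
    (Finset.univ.filter (fun i : Fin k => (false : Bool) = true)) = ∅ := by simp

lemma filter_single {k : ℕ} (i : Fin k) :
    (Finset.univ.filter (fun j : Fin k => (decide (j = i)) = true)) = {i} := by
  ext j; simp

lemma filter_double {k : ℕ} (i i' : Fin k) :
    (Finset.univ.filter (fun j : Fin k => (decide (j = i) || decide (j = i')) = true))
      = {i, i'} := by
  ext j; simp

lemma tfun_range (k : ℕ) : Set.range (tfun k) = Tset k := by
  ext q
  constructor
  · rintro ⟨x, rfl⟩ ε
    match x with
    | Sum.inl b =>
      simp only [tfun, Pi.zero_apply, Finset.sum_const_zero]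
      cases b <;> norm_num
    | Sum.inr (i, b) =>
      simp only [tfun]
      rw [Finset.sum_ite_eq' (Finset.univ.filter (fun j : Fin k => ε j = true)) i
        (fun _ => if b then (1:ℤ) else -1)]
      cases b <;> by_cases hm : ε i = true <;> simp [hm] <;> norm_num
  · intro hq
    have h0 := hq (fun _ => false)
    rw [filter_const_false, Finset.sum_empty] at h0
    have hsing : ∀ i : Fin k, 0 ≤ q.1 + q.2 i ∧ q.1 + q.2 i < 2 := by
      intro i
      have := hq (fun j => decide (j = i))
      rwa [filter_single, Finset.sum_singleton, Nat.cast_ofNat] at this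
    by_cases hz : ∀ i, q.2 i = 0
    · refine ⟨Sum.inl (decide (q.1 = 1)), ?_⟩
      have : q.2 = 0 := funext hz
      simp only [tfun, this]
      norm_num at h0
      have : q.1 = 0 ∨ q.1 = 1 := by omega
      rcases this with h | h <;> simp [h, Prod.ext_iff, ‹q.2 = 0›]
    · push_neg at hz
      obtain ⟨i, hi⟩ := hz
      have hdouble : ∀ j, j ≠ i → 0 ≤ q.1 + q.2 i + q.2 j ∧ q.1 + q.2 i + q.2 j < 2 := by
        intro j hj
        have := hq (fun l => decide (l = i) || decide (l = j))
        rw [filter_double, Finset.sum_pair (Ne.symm hj), Nat.cast_ofNat] at this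
        constructor <;> linarith [this.1, this.2]
      norm_num at h0
      have hi1 := hsing i
      have hzero : ∀ j, j ≠ i → q.2 j = 0 := by
        intro j hj
        have := hdouble j hj
        have := hsing j
        omega
      refine ⟨Sum.inr (i, decide (q.2 i = 1)), ?_⟩
      have hcase : (q.2 i = 1 ∧ q.1 = 0) ∨ (q.2 i = -1 ∧ q.1 = 1) := by omega
      rcases hcase with ⟨h1, h2⟩ | ⟨h1, h2⟩ <;>
      · simp only [tfun, h1, Prod.ext_iff]
        norm_num [h2]
        funext j
        by_cases hji : j = i
        · subst hji; simp [h1]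
        · simp [hji, hzero j hji]

lemma Tset_ncard (k : ℕ) : (Tset k).ncard = 2 * k + 2 := by
  rw [← tfun_range, ← Nat.card_coe_set_eq,
    Nat.card_range_of_injective (tfun_injective k)]
  simp [Nat.card_eq_fintype_card]
  ring

lemma mem_energy_iff {d k : ℕ} (p : (Fin d → ℤ) × (Fin k → Fin d → ℤ)) :
    (∀ ε : Fin k → Bool,
      p.1 + ∑ i ∈ Finset.univ.filter (fun i => ε i = true), p.2 i ∈ cube 2 d) ↔
    ∀ j : Fin d, (p.1 j, fun i => p.2 i j) ∈ Tset k := by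
  simp only [cube, Tset, Set.mem_setOf_eq, Pi.add_apply, Finset.sum_apply]
  exact forall_comm

lemma Pk_cube (d k : ℕ) : Pk k (cube 2 d) = (2 * k + 2) ^ d := by
  have e : {p : (Fin d → ℤ) × (Fin k → Fin d → ℤ) |
      ∀ ε : Fin k → Bool,
        p.1 + ∑ i ∈ Finset.univ.filter (fun i => ε i = true), p.2 i ∈ cube 2 d}
      ≃ (Fin d → Tset k) :=
    { toFun := fun p j => ⟨(p.1.1 j, fun i => p.1.2 i j), (mem_energy_iff p.1).mp p.2 j⟩
      invFun := fun g => ⟨((fun j => (g j).1.1), fun i j => (g j).1.2 i),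
        (mem_energy_iff _).mpr fun j => (g j).2⟩
      left_inv := fun p => rfl
      right_inv := fun g => rfl }
  rw [Pk, ← Nat.card_coe_set_eq, Nat.card_congr e, Nat.card_fun,
    Nat.card_coe_set_eq, Tset_ncard, Nat.card_eq_fintype_card, Fintype.card_fin]

lemma cube_ncard (d : ℕ) : (cube 2 d).ncard = 2 ^ d := by
  set I : Set ℤ := {x | 0 ≤ x ∧ x < ((2 : ℕ) : ℤ)} with hI
  have e : cube 2 d ≃ (Fin d → I) :=
    { toFun := fun x j => ⟨x.1 j, x.2 j⟩
      invFun := fun g => ⟨fun j => (g j).1, fun j => (g j).2⟩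
      left_inv := fun x => rfl
      right_inv := fun g => rfl }
  have hIcard : I.ncard = 2 := by
    have : I = {0, 1} := by
      ext x; simp only [hI, Set.mem_setOf_eq, Set.mem_insert_iff, Set.mem_singleton_iff]
      norm_num; omega
    rw [this, Set.ncard_pair (by norm_num)]
  rw [← Nat.card_coe_set_eq, Nat.card_congr e, Nat.card_fun,
    Nat.card_coe_set_eq, hIcard, Nat.card_eq_fintype_card, Fintype.card_fin]

theorem energy_full_binary_cube (d k : ℕ) (hk : 2 ≤ k) :
    Pk k (cube 2 d) = (2 * k + 2) ^ d ∧
    (Pk k (cube 2 d) : ℝ) = (((cube 2 d).ncard : ℝ)) ^ Real.logb 2 (2 * (k : ℝ) + 2) := by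
  refine ⟨Pk_cube d k, ?_⟩
  rw [Pk_cube d k, cube_ncard d]
  have hc : (0 : ℝ) < 2 * (k : ℝ) + 2 := by positivity
  push_cast
  rw [← Real.rpow_natCast (2 : ℝ) d, ← Real.rpow_natCast (2 * (k : ℝ) + 2) d,
    ← Real.rpow_mul (by norm_num : (0:ℝ) ≤ 2), mul_comm (d : ℝ),
    Real.rpow_mul (by norm_num : (0:ℝ) ≤ 2),
    Real.rpow_logb (by norm_num) (by norm_num) hc]
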